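/- Let A be a ring with involution, n ≥ 0, and let (C, φ) and (C', φ') be n-dimensional symmetric Poincaré complexes of finitely generated projective left A-modules: collections φ_s: C^{n−r+s} → C_r and φ'_s: C'^{n−r+s} → C'_r (s ≥ 0) satisfying the symmetric-structure equations, with φ₀: C^{n−*} → C_* and φ'₀: C'^{n−*} → C'_* chain homotopy equivalences. Let f: C → C' be a chain homotopy equivalence with f ∘ φ_s ∘ f* = φ'_s for all s ≥ 0. Then ((f, 1): C ⊕ C' → C', (0, φ ⊕ −φ')) is an (n+1)-dimensional symmetric Poincaré pair: the relative symmetric-pair equations hold, and the chain map 𝒞((f,1))^{n+1−*} → C'_* with components (0, (f,1)∘(φ₀ ⊕ −φ'₀)) induces isomorphisms H^r(𝒞((f,1))) ≅ H_{n+1−r}(C') for all 0 ≤ r ≤ n+1. (This is the algebraic product cobordism.) -/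

import Mathlib

namespace stmt11

universe u u' v

variable (A : Type v) [Ring A] [StarRing A]

/-- The dual `Hom_A(M, A)` of a left `A`-module over a ring with involution,
made into a left `A`-module using the involution: `(a·ξ)(x) = ξ(x)·(star a)`. -/
def Dual (M : Type u) [AddCommGroup M] [Module A M] : Type (max u v) := M →ₗ[A] A

instance (M : Type u) [AddCommGroup M] [Module A M] : AddCommGroup (Dual A M) :=
  inferInstanceAs (AddCommGroup (M →ₗ[A] A))

/-- The underlying `A`-linear map of an element of the dual. -/
def toL {M : Type u} [AddCommGroup M] [Module A M] (ξ : Dual A M) : M →ₗ[A] A := ξ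

/-- An `A`-linear map `M → A` as an element of the dual. -/
def ofL {M : Type u} [AddCommGroup M] [Module A M] (ξ : M →ₗ[A] A) : Dual A M := ξ

/-- Scalar multiplication on the dual: `(a·ξ)(x) = ξ(x)·(star a)`. -/
def dsmul {M : Type u} [AddCommGroup M] [Module A M] (a : A) (ξ : Dual A M) :
    Dual A M :=
  ofL A
  { toFun := fun x => toL A ξ x * star a
    map_add' := fun x y => by
      show toL A ξ (x + y) * star a = toL A ξ x * star a + toL A ξ y * star a
      rw [map_add, add_mul]
    map_smul' := fun c x => by
      show toL A ξ (c • x) * star a = c • (toL A ξ x * star a)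
      rw [map_smul, smul_eq_mul, smul_eq_mul, mul_assoc] }

instance (M : Type u) [AddCommGroup M] [Module A M] : Module A (Dual A M) where
  smul := dsmul A
  one_smul ξ := LinearMap.ext fun x => by
    show toL A ξ x * star 1 = toL A ξ x
    rw [star_one, mul_one]
  mul_smul a b ξ := LinearMap.ext fun x => by
    show toL A ξ x * star (a * b) = (toL A ξ x * star b) * star a
    rw [star_mul, mul_assoc]
  smul_zero a := LinearMap.ext fun x => by
    show toL A (0 : Dual A M) x * star a = toL A (0 : Dual A M) x
    show (0 : A) * star a = (0 : A)
    rw [zero_mul]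
  smul_add a ξ ζ := LinearMap.ext fun x => by
    show toL A (ξ + ζ) x * star a = _
    show (toL A ξ x + toL A ζ x) * star a
      = toL A ξ x * star a + toL A ζ x * star a
    rw [add_mul]
  add_smul a b ξ := LinearMap.ext fun x => by
    show toL A ξ x * star (a + b) = toL A ξ x * star a + toL A ξ x * star b
    rw [star_add, mul_add]
  zero_smul ξ := LinearMap.ext fun x => by
    show toL A ξ x * star 0 = (0 : A)
    rw [star_zero, mul_zero]

variable {A}

/-- The dual `f* = (ξ ↦ ξ ∘ f)` of an `A`-linear map (precomposition), which
is `A`-linear for the star-twisted module structures on the duals. -/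
def dualMap {M : Type u} {N : Type u'} [AddCommGroup M] [Module A M]
    [AddCommGroup N] [Module A N] (f : M →ₗ[A] N) :
    Dual A N →ₗ[A] Dual A M where
  toFun ξ := ofL A ((toL A ξ).comp f)
  map_add' ξ ζ := LinearMap.ext fun x => rfl
  map_smul' a ξ := LinearMap.ext fun x => rfl

variable (A)

/-- The canonical map `M → M**`, `x ↦ (ξ ↦ star (ξ x))`; it is bijective for
finitely generated projective `M`, giving the identification under which the
transposition `Tθ` of `θ ∈ Hom_A(C^p, C_q)` satisfies
`ev ∘ Tθ = (-1)^{pq}·(dual of θ)`. -/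
def evMap (M : Type u) [AddCommGroup M] [Module A M] :
    M →ₗ[A] Dual A (Dual A M) where
  toFun x := ofL A
    { toFun := fun ξ => star (toL A ξ x)
      map_add' := fun ξ ζ => by
        show star (toL A ξ x + toL A ζ x) = _
        rw [star_add]
      map_smul' := fun a ξ => by
        show star (toL A ξ x * star a) = a • star (toL A ξ x)
        rw [star_mul, star_star, smul_eq_mul] }
  map_add' x y := LinearMap.ext fun ξ => by
    show star (toL A ξ (x + y)) = star (toL A ξ x) + star (toL A ξ y)
    rw [map_add, star_add]
  map_smul' a x := LinearMap.ext fun ξ => by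
    show star (toL A ξ (a • x)) = star (toL A ξ x) * star a
    rw [map_smul, smul_eq_mul, star_mul]

/-- The algebraic mapping cone `𝒞((f,1) : C ⊕ C' → C')`,
`𝒞_r = C'_r ⊕ (C_{r-1} ⊕ C'_{r-1})`. -/
def Cone (C C' : ℕ → Type u) : ℕ → Type u
  | 0 => C' 0
  | (r + 1) => C' (r + 1) × (C r × C' r)

instance (C C' : ℕ → Type u) [∀ r, AddCommGroup (C r)]
    [∀ r, AddCommGroup (C' r)] : ∀ r, AddCommGroup (Cone C C' r)
  | 0 => inferInstanceAs (AddCommGroup (C' 0))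
  | (r + 1) => inferInstanceAs (AddCommGroup (C' (r + 1) × (C r × C' r)))

instance (C C' : ℕ → Type u) [∀ r, AddCommGroup (C r)]
    [∀ r, AddCommGroup (C' r)] [∀ r, Module A (C r)] [∀ r, Module A (C' r)] :
    ∀ r, Module A (Cone C C' r)
  | 0 => inferInstanceAs (Module A (C' 0))
  | (r + 1) => inferInstanceAs (Module A (C' (r + 1) × (C r × C' r)))

variable {A}

/-- The differential of the mapping cone of `(f,1) : C ⊕ C' → C'`:
on `𝒞_{r+1}`, `(y, (x, x')) ↦ (∂y + (-1)^r (f x + x'), (∂x, ∂x'))`. -/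
noncomputable def dCone (C C' : ℕ → Type u) [∀ r, AddCommGroup (C r)]
    [∀ r, AddCommGroup (C' r)] [∀ r, Module A (C r)] [∀ r, Module A (C' r)]
    (dC : ∀ r, C (r + 1) →ₗ[A] C r) (dC' : ∀ r, C' (r + 1) →ₗ[A] C' r)
    (f : ∀ r, C r →ₗ[A] C' r) :
    ∀ r, Cone C C' (r + 1) →ₗ[A] Cone C C' r
  | 0 =>
      dC' 0 ∘ₗ LinearMap.fst A (C' 1) (C 0 × C' 0)
        + (f 0 ∘ₗ LinearMap.fst A (C 0) (C' 0)
            + LinearMap.snd A (C 0) (C' 0)) ∘ₗ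
          LinearMap.snd A (C' 1) (C 0 × C' 0)
  | (r + 1) =>
      LinearMap.prod
        (dC' (r + 1) ∘ₗ LinearMap.fst A (C' (r + 2)) (C (r + 1) × C' (r + 1))
          + ((-1 : ℤ) ^ (r + 1)) •
            ((f (r + 1) ∘ₗ LinearMap.fst A (C (r + 1)) (C' (r + 1))
                + LinearMap.snd A (C (r + 1)) (C' (r + 1))) ∘ₗ
              LinearMap.snd A (C' (r + 2)) (C (r + 1) × C' (r + 1))))
        (LinearMap.prodMap (dC r) (dC' r) ∘ₗ
          LinearMap.snd A (C' (r + 2)) (C (r + 1) × C' (r + 1)))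

/-- The inclusion `C_r → 𝒞_{r+1}`, `x ↦ (0, (x, 0))`. -/
def inC (C C' : ℕ → Type u) [∀ r, AddCommGroup (C r)]
    [∀ r, AddCommGroup (C' r)] [∀ r, Module A (C r)] [∀ r, Module A (C' r)]
    (r : ℕ) : C r →ₗ[A] Cone C C' (r + 1) :=
  LinearMap.prod 0 (LinearMap.prod LinearMap.id 0)

/-- The inclusion `C'_r → 𝒞_{r+1}`, `x' ↦ (0, (0, x'))`. -/
def inC' (C C' : ℕ → Type u) [∀ r, AddCommGroup (C r)]
    [∀ r, AddCommGroup (C' r)] [∀ r, Module A (C r)] [∀ r, Module A (C' r)]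
    (r : ℕ) : C' r →ₗ[A] Cone C C' (r + 1) :=
  LinearMap.prod 0 (LinearMap.prod 0 LinearMap.id)

/-- The relative duality map `(0, (f,1)∘(φ₀ ⊕ -φ'₀)) : 𝒞^{n+1-*} → C'_*` of the
symmetric pair `((f,1) : C ⊕ C' → C', (0, φ ⊕ -φ'))`: on a cone degree
`rc = r+1`, `ξ ↦ f(φ₀(ξ ∘ ι_C)) - φ'₀(ξ ∘ ι_{C'})`. -/
noncomputable def Phi (C C' : ℕ → Type u) [∀ r, AddCommGroup (C r)]
    [∀ r, AddCommGroup (C' r)] [∀ r, Module A (C r)] [∀ r, Module A (C' r)]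
    (f : ∀ r, C r →ₗ[A] C' r)
    (φ : ∀ s r m : ℕ, Dual A (C m) →ₗ[A] C r)
    (φ' : ∀ s r m : ℕ, Dual A (C' m) →ₗ[A] C' r) :
    ∀ rc rt : ℕ, Dual A (Cone C C' rc) →ₗ[A] C' rt
  | 0, _ => 0
  | (r + 1), rt =>
      f rt ∘ₗ φ 0 rt r ∘ₗ dualMap (inC C C' r)
        - φ' 0 rt r ∘ₗ dualMap (inC' C C' r)

/-- The direct sum symmetric structure `φ ⊕ -φ'` on `C ⊕ C'`. -/
noncomputable def sumPhi (C C' : ℕ → Type u) [∀ r, AddCommGroup (C r)]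
    [∀ r, AddCommGroup (C' r)] [∀ r, Module A (C r)] [∀ r, Module A (C' r)]
    (φ : ∀ s r m : ℕ, Dual A (C m) →ₗ[A] C r)
    (φ' : ∀ s r m : ℕ, Dual A (C' m) →ₗ[A] C' r)
    (s r m : ℕ) : Dual A (C m × C' m) →ₗ[A] (C r × C' r) :=
  LinearMap.prod
    (φ s r m ∘ₗ dualMap (LinearMap.inl A (C m) (C' m)))
    (-(φ' s r m ∘ₗ dualMap (LinearMap.inr A (C m) (C' m))))

end stmt11

namespace stmt11

variable {A : Type v} [Ring A] [StarRing A]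
variable {M : Type u} {N : Type u'} [AddCommGroup M] [Module A M] [AddCommGroup N] [Module A N]

lemma dext {ξ ζ : Dual A M} (h : ∀ x, toL A ξ x = toL A ζ x) : ξ = ζ := LinearMap.ext h

@[simp] lemma toL_dualMap (f : M →ₗ[A] N) (ξ : Dual A N) (x : M) :
    toL A (dualMap f ξ) x = toL A ξ (f x) := rfl

@[simp] lemma toL_add (ξ ζ : Dual A M) (x : M) :
    toL A (ξ + ζ) x = toL A ξ x + toL A ζ x := rfl

@[simp] lemma toL_sub (ξ ζ : Dual A M) (x : M) :
    toL A (ξ - ζ) x = toL A ξ x - toL A ζ x := rfl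

@[simp] lemma toL_neg (ξ : Dual A M) (x : M) : toL A (-ξ) x = -(toL A ξ x) := rfl

@[simp] lemma toL_zero (x : M) : toL A (0 : Dual A M) x = 0 := rfl

@[simp] lemma toL_zsmul (c : ℤ) (ξ : Dual A M) (x : M) :
    toL A (c • ξ) x = c • toL A ξ x := rfl

@[simp] lemma toL_map_add (ξ : Dual A M) (x y : M) :
    toL A ξ (x + y) = toL A ξ x + toL A ξ y := map_add _ _ _

@[simp] lemma toL_map_zero (ξ : Dual A M) : toL A ξ (0 : M) = 0 := map_zero _

@[simp] lemma toL_map_zsmul (ξ : Dual A M) (c : ℤ) (x : M) :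
    toL A ξ (c • x) = c • toL A ξ x := map_zsmul (toL A ξ) c x

end stmt11
namespace stmt11
variable {A : Type v} [Ring A] [StarRing A]
variable {M : Type u} {N : Type u'} [AddCommGroup M] [Module A M] [AddCommGroup N] [Module A N]

@[simp] lemma toL_evMap (x : M) (ζ : Dual A M) :
    toL A (evMap A M x) ζ = star (toL A ζ x) := rfl

lemma toL_pair (ζ : Dual A (M × N)) (u : M) (v : N) :
    toL A ζ (u, v) = toL A (dualMap (LinearMap.inl A M N) ζ) u
      + toL A (dualMap (LinearMap.inr A M N) ζ) v := by
  rw [toL_dualMap, toL_dualMap, ← toL_map_add]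
  simp
end stmt11
namespace stmt11
variable {A : Type v} [Ring A] [StarRing A]
variable {M : Type u} [AddCommGroup M] [Module A M]
@[simp] lemma toL_map_neg (ξ : Dual A M) (x : M) :
    toL A ξ (-x) = -(toL A ξ x) := map_neg _ _
@[simp] lemma toL_map_sub (ξ : Dual A M) (x y : M) :
    toL A ξ (x - y) = toL A ξ x - toL A ξ y := map_sub _ _ _
end stmt11
namespace stmt11
variable {A : Type v} [Ring A] [StarRing A]
variable {C C' : ℕ → Type u} [∀ r, AddCommGroup (C r)] [∀ r, AddCommGroup (C' r)]
  [∀ r, Module A (C r)] [∀ r, Module A (C' r)]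

/-- The inclusion `C'_{r+1} → Cone_{r+1}` as a map into the cone. -/
def inD (r : ℕ) : C' (r + 1) →ₗ[A] Cone C C' (r + 1) :=
  LinearMap.prod LinearMap.id 0

lemma toL_cone (r : ℕ) (ξ : Dual A (Cone C C' (r + 1))) (v : Cone C C' (r + 1)) :
    toL A ξ v = toL A (dualMap (inD (A := A) (C := C) (C' := C') r) ξ) v.1
      + toL A (dualMap (inC C C' r) ξ) v.2.1
      + toL A (dualMap (inC' C C' r) ξ) v.2.2 := by
  obtain ⟨a, b, c⟩ := v
  show toL A ξ (a, (b, c))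
      = toL A ξ (inD (A := A) (C := C) (C' := C') r a)
        + toL A ξ (inC C C' r b) + toL A ξ (inC' C C' r c)
  have hsum : inD (A := A) (C := C) (C' := C') r a + inC (A := A) C C' r b
        + inC' (A := A) C C' r c
      = ((a, (b, c)) : Cone C C' (r + 1)) := by
    show ((a + 0 + 0, (0 + b + 0, 0 + 0 + c)) : C' (r + 1) × (C r × C' r)) = (a, (b, c))
    simp
  rw [← toL_map_add, ← toL_map_add, hsum]
end stmt11
namespace stmt11
section
variable {A : Type v} [Ring A] [StarRing A]

lemma neg_one_smul_smul {M : Type u} [AddCommGroup M] (k : ℕ) (x : M) :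
    ((-1 : ℤ) ^ k) • ((-1 : ℤ) ^ k) • x = x := by
  rw [smul_smul, ← pow_add, Even.neg_one_pow ⟨k, rfl⟩, one_smul]

lemma neg_one_smul_eq_zero {M : Type u} [AddCommGroup M] (k : ℕ) {x : M}
    (h : ((-1 : ℤ) ^ k) • x = 0) : x = 0 := by
  rw [← neg_one_smul_smul k x, h, smul_zero]

variable {C C' : ℕ → Type u} [∀ r, AddCommGroup (C r)] [∀ r, AddCommGroup (C' r)]
  [∀ r, Module A (C r)] [∀ r, Module A (C' r)]

/-- Projection `Cone_{r+1} → C_r`. -/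
def prC (r : ℕ) : Cone C C' (r + 1) →ₗ[A] C r :=
  (LinearMap.fst A (C r) (C' r)) ∘ₗ (LinearMap.snd A (C' (r + 1)) (C r × C' r))

/-- Projection `Cone_{r+1} → C'_{r+1}`. -/
def prD (r : ℕ) : Cone C C' (r + 1) →ₗ[A] C' (r + 1) :=
  LinearMap.fst A (C' (r + 1)) (C r × C' r)

lemma prC_inC (r : ℕ) (ζ : Dual A (C r)) :
    dualMap (inC C C' r) (dualMap (prC (A := A) (C := C) (C' := C') r) ζ) = ζ :=
  dext fun _ => rfl

lemma prC_inC' (r : ℕ) (ζ : Dual A (C r)) :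
    dualMap (inC' C C' r) (dualMap (prC (A := A) (C := C) (C' := C') r) ζ) = 0 :=
  dext fun x => by
    rw [toL_dualMap, toL_dualMap,
      show prC (A := A) (C := C) (C' := C') r (inC' C C' r x) = 0 from rfl]
    simp

variable (dC : ∀ r, C (r + 1) →ₗ[A] C r) (dC' : ∀ r, C' (r + 1) →ₗ[A] C' r)
  (f : ∀ r, C r →ₗ[A] C' r)

lemma cone_k1 (r : ℕ) (ξ : Dual A (Cone C C' (r + 1))) :
    dualMap (inC C C' (r + 1)) (dualMap (dCone C C' dC dC' f (r + 1)) ξ)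
      = ((-1 : ℤ) ^ (r + 1)) •
          dualMap (f (r + 1)) (dualMap (inD (A := A) (C := C) (C' := C') r) ξ)
        + dualMap (dC r) (dualMap (inC C C' r) ξ) :=
  dext fun x => by
    rw [toL_dualMap, toL_dualMap,
      show dCone C C' dC dC' f (r + 1) (inC C C' (r + 1) x)
        = ((dC' (r + 1) 0 + ((-1 : ℤ)) ^ (r + 1) • (f (r + 1) x + 0),
            (dC r x, dC' r 0)) : Cone C C' (r + 1)) from rfl]
    refine (toL_cone r ξ _).trans ?_
    simp

lemma cone_k2 (r : ℕ) (ξ : Dual A (Cone C C' (r + 1))) :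
    dualMap (inC' C C' (r + 1)) (dualMap (dCone C C' dC dC' f (r + 1)) ξ)
      = ((-1 : ℤ) ^ (r + 1)) • dualMap (inD (A := A) (C := C) (C' := C') r) ξ
        + dualMap (dC' r) (dualMap (inC' C C' r) ξ) :=
  dext fun x => by
    rw [toL_dualMap, toL_dualMap,
      show dCone C C' dC dC' f (r + 1) (inC' C C' (r + 1) x)
        = ((dC' (r + 1) 0 + ((-1 : ℤ)) ^ (r + 1) • (f (r + 1) 0 + x),
            (dC r 0, dC' r x)) : Cone C C' (r + 1)) from rfl]
    refine (toL_cone r ξ _).trans ?_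
    simp

end
end stmt11
set_option maxHeartbeats 1000000 in
open stmt11 in
/-- Let `A` be a ring with involution, `n ≥ 0`, and let
`(C, φ)` and `(C', φ')` be `n`-dimensional symmetric Poincaré complexes of
finitely generated projective left `A`-modules: collections
`φ_s : C^{n-r+s} → C_r`, `φ'_s : C'^{n-r+s} → C'_r` (recorded here by their
components `φ s r m : Dual(C_m) → C_r`, relevant when `m + r = n + s`)
satisfying the symmetric-structure equations
`dφ_s + (-1)^rφ_sδ + (-1)^{n+s-1}(φ_{s-1} + (-1)^sTφ_{s-1}) = 0`
(the `s ≥ 1` equations being recorded after composition with the canonical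
embedding `ev : C_r → C_r**`, under which `ev ∘ Tθ = (-1)^{pq}·θ`-dual), with
`φ₀ : C^{n-*} → C_*` and `φ'₀` chain homotopy equivalences.  Let `f : C → C'`
be a chain homotopy equivalence with `f ∘ φ_s ∘ f* = φ'_s` for all `s`.  Then
`((f,1) : C ⊕ C' → C', (0, φ ⊕ -φ'))` is an `(n+1)`-dimensional symmetric
Poincaré pair:  the relative symmetric-pair equations hold — i.e.
`(f,1) ∘ (φ ⊕ -φ')_s ∘ (f,1)* = 0` and `φ ⊕ -φ'` satisfies the
symmetric-structure equations — and the chain map `𝒞((f,1))^{n+1-*} → C'_*`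
with components `(0, (f,1)∘(φ₀ ⊕ -φ'₀))` induces isomorphisms
`H^r(𝒞((f,1))) ≅ H_{n+1-r}(C')` for all `0 ≤ r ≤ n+1`.  (This is the
algebraic product cobordism.) -/
theorem stmt_11 (A : Type*) [Ring A] [StarRing A] (n : ℕ)
    (C C' : ℕ → Type)
    [∀ r, AddCommGroup (C r)] [∀ r, Module A (C r)]
    [∀ r, AddCommGroup (C' r)] [∀ r, Module A (C' r)]
    -- finitely generated projective
    (hfg : ∀ r, Module.Finite A (C r)) (hproj : ∀ r, Module.Projective A (C r))
    (hfg' : ∀ r, Module.Finite A (C' r)) (hproj' : ∀ r, Module.Projective A (C' r))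
    -- n-dimensional
    (hbd : ∀ r, n < r → Subsingleton (C r))
    (hbd' : ∀ r, n < r → Subsingleton (C' r))
    (dC : ∀ r, C (r + 1) →ₗ[A] C r) (dC' : ∀ r, C' (r + 1) →ₗ[A] C' r)
    (hdd : ∀ r (x : C (r + 2)), dC r (dC (r + 1) x) = 0)
    (hdd' : ∀ r (x : C' (r + 2)), dC' r (dC' (r + 1) x) = 0)
    -- the symmetric structures
    (φ : ∀ s r m : ℕ, Dual A (C m) →ₗ[A] C r)
    (φ' : ∀ s r m : ℕ, Dual A (C' m) →ₗ[A] C' r)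
    (hφsupp : ∀ s r m, m + r ≠ n + s → φ s r m = 0)
    (hφsupp' : ∀ s r m, m + r ≠ n + s → φ' s r m = 0)
    (hφ0 : ∀ r m, m + r + 1 = n →
      dC r ∘ₗ φ 0 (r + 1) m
        + ((-1 : ℤ) ^ r) • (φ 0 r (m + 1) ∘ₗ dualMap (dC m)) = 0)
    (hφ0' : ∀ r m, m + r + 1 = n →
      dC' r ∘ₗ φ' 0 (r + 1) m
        + ((-1 : ℤ) ^ r) • (φ' 0 r (m + 1) ∘ₗ dualMap (dC' m)) = 0)
    (hφS : ∀ s r m, m + r = n + s →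
      evMap A (C r) ∘ₗ
          (dC r ∘ₗ φ (s + 1) (r + 1) m
            + ((-1 : ℤ) ^ r) • (φ (s + 1) r (m + 1) ∘ₗ dualMap (dC m))
            + ((-1 : ℤ) ^ (n + s)) • φ s r m)
        + (((-1 : ℤ) ^ (n + s) * (-1 : ℤ) ^ (s + 1) * (-1 : ℤ) ^ (r * m)) •
            dualMap (φ s m r)) = 0)
    (hφS' : ∀ s r m, m + r = n + s →
      evMap A (C' r) ∘ₗ
          (dC' r ∘ₗ φ' (s + 1) (r + 1) m
            + ((-1 : ℤ) ^ r) • (φ' (s + 1) r (m + 1) ∘ₗ dualMap (dC' m))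
            + ((-1 : ℤ) ^ (n + s)) • φ' s r m)
        + (((-1 : ℤ) ^ (n + s) * (-1 : ℤ) ^ (s + 1) * (-1 : ℤ) ^ (r * m)) •
            dualMap (φ' s m r)) = 0)
    -- (C, φ) is Poincaré: φ₀ : C^{n-*} → C_* is a chain homotopy equivalence
    (hP : ∃ (ψ : ∀ r m : ℕ, C r →ₗ[A] Dual A (C m))
        (hh : ∀ r, C r →ₗ[A] C (r + 1))
        (kk : ∀ m, Dual A (C (m + 1)) →ₗ[A] Dual A (C m)),
      (∀ r m, r + m ≠ n → ψ r m = 0) ∧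
      (∀ r m, m + r + 1 = n →
        ((-1 : ℤ) ^ (r + 1)) • (dualMap (dC m) ∘ₗ ψ (r + 1) m)
          = ψ r (m + 1) ∘ₗ dC r) ∧
      (φ 0 0 n ∘ₗ ψ 0 n - LinearMap.id = dC 0 ∘ₗ hh 0) ∧
      (∀ r m, m + (r + 1) = n →
        φ 0 (r + 1) m ∘ₗ ψ (r + 1) m - LinearMap.id
          = dC (r + 1) ∘ₗ hh (r + 1) + hh r ∘ₗ dC r) ∧
      (ψ n 0 ∘ₗ φ 0 n 0 - LinearMap.id
        = ((-1 : ℤ) ^ n) • (kk 0 ∘ₗ dualMap (dC 0))) ∧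
      (∀ r m, (m + 1) + r = n →
        ψ r (m + 1) ∘ₗ φ 0 r (m + 1) - LinearMap.id
          = ((-1 : ℤ) ^ (r + 1)) • (dualMap (dC m) ∘ₗ kk m)
            + ((-1 : ℤ) ^ r) • (kk (m + 1) ∘ₗ dualMap (dC (m + 1)))))
    -- (C', φ') is Poincaré
    (hP' : ∃ (ψ : ∀ r m : ℕ, C' r →ₗ[A] Dual A (C' m))
        (hh : ∀ r, C' r →ₗ[A] C' (r + 1))
        (kk : ∀ m, Dual A (C' (m + 1)) →ₗ[A] Dual A (C' m)),
      (∀ r m, r + m ≠ n → ψ r m = 0) ∧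
      (∀ r m, m + r + 1 = n →
        ((-1 : ℤ) ^ (r + 1)) • (dualMap (dC' m) ∘ₗ ψ (r + 1) m)
          = ψ r (m + 1) ∘ₗ dC' r) ∧
      (φ' 0 0 n ∘ₗ ψ 0 n - LinearMap.id = dC' 0 ∘ₗ hh 0) ∧
      (∀ r m, m + (r + 1) = n →
        φ' 0 (r + 1) m ∘ₗ ψ (r + 1) m - LinearMap.id
          = dC' (r + 1) ∘ₗ hh (r + 1) + hh r ∘ₗ dC' r) ∧
      (ψ n 0 ∘ₗ φ' 0 n 0 - LinearMap.id
        = ((-1 : ℤ) ^ n) • (kk 0 ∘ₗ dualMap (dC' 0))) ∧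
      (∀ r m, (m + 1) + r = n →
        ψ r (m + 1) ∘ₗ φ' 0 r (m + 1) - LinearMap.id
          = ((-1 : ℤ) ^ (r + 1)) • (dualMap (dC' m) ∘ₗ kk m)
            + ((-1 : ℤ) ^ r) • (kk (m + 1) ∘ₗ dualMap (dC' (m + 1)))))
    -- f : C → C' is a chain homotopy equivalence …
    (f : ∀ r, C r →ₗ[A] C' r)
    (hf : ∀ r, dC' r ∘ₗ f (r + 1) = f r ∘ₗ dC r)
    (hfe : ∃ (g : ∀ r, C' r →ₗ[A] C r) (h : ∀ r, C r →ₗ[A] C (r + 1))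
        (h' : ∀ r, C' r →ₗ[A] C' (r + 1)),
      (∀ r, dC r ∘ₗ g (r + 1) = g r ∘ₗ dC' r) ∧
      (g 0 ∘ₗ f 0 - LinearMap.id = dC 0 ∘ₗ h 0) ∧
      (∀ r, g (r + 1) ∘ₗ f (r + 1) - LinearMap.id
        = dC (r + 1) ∘ₗ h (r + 1) + h r ∘ₗ dC r) ∧
      (f 0 ∘ₗ g 0 - LinearMap.id = dC' 0 ∘ₗ h' 0) ∧
      (∀ r, f (r + 1) ∘ₗ g (r + 1) - LinearMap.id
        = dC' (r + 1) ∘ₗ h' (r + 1) + h' r ∘ₗ dC' r))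
    -- … with f ∘ φ_s ∘ f* = φ'_s
    (hcompat : ∀ s r m, m + r = n + s →
      f r ∘ₗ φ s r m ∘ₗ dualMap (f m) = φ' s r m) :
    -- Conclusion (1): the relative symmetric-pair equations hold:
    -- (f,1) ∘ (φ ⊕ -φ')_s ∘ (f,1)* = 0 …
    (∀ s r m : ℕ, m + r = n + s →
      LinearMap.coprod (f r) LinearMap.id ∘ₗ sumPhi C C' φ φ' s r m ∘ₗ
          dualMap (LinearMap.coprod (f m) LinearMap.id) = 0) ∧
    -- … and φ ⊕ -φ' satisfies the symmetric-structure equations on C ⊕ C'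
    (∀ r m : ℕ, m + r + 1 = n →
      LinearMap.prodMap (dC r) (dC' r) ∘ₗ sumPhi C C' φ φ' 0 (r + 1) m
        + ((-1 : ℤ) ^ r) • (sumPhi C C' φ φ' 0 r (m + 1) ∘ₗ
            dualMap (LinearMap.prodMap (dC m) (dC' m))) = 0) ∧
    (∀ s r m : ℕ, m + r = n + s →
      evMap A (C r × C' r) ∘ₗ
          (LinearMap.prodMap (dC r) (dC' r) ∘ₗ sumPhi C C' φ φ' (s + 1) (r + 1) m
            + ((-1 : ℤ) ^ r) • (sumPhi C C' φ φ' (s + 1) r (m + 1) ∘ₗ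
                dualMap (LinearMap.prodMap (dC m) (dC' m)))
            + ((-1 : ℤ) ^ (n + s)) • sumPhi C C' φ φ' s r m)
        + (((-1 : ℤ) ^ (n + s) * (-1 : ℤ) ^ (s + 1) * (-1 : ℤ) ^ (r * m)) •
            (dualMap (sumPhi C C' φ φ' s m r) :
              Dual A (C m × C' m) →ₗ[A] Dual A (Dual A (C r × C' r)))) = 0) ∧
    -- Conclusion (2): (0, (f,1)∘(φ₀⊕-φ'₀)) is a chain map 𝒞^{n+1-*} → C'_* …
    (∀ rc rt : ℕ, rc + rt = n →
      dC' rt ∘ₗ Phi C C' f φ φ' rc (rt + 1)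
        + ((-1 : ℤ) ^ rt) • (Phi C C' f φ φ' (rc + 1) rt ∘ₗ
            dualMap (dCone C C' dC dC' f rc)) = 0) ∧
    -- … which induces isomorphisms H^r(𝒞((f,1))) ≅ H_{n+1-r}(C'):
    -- injectivity on cohomology (cone degrees rc ≥ 1) …
    (∀ rc rt : ℕ, rc + 1 + rt = n + 1 →
      ∀ ξ : Dual A (Cone C C' (rc + 1)),
        dualMap (dCone C C' dC dC' f (rc + 1)) ξ = 0 →
        (∃ z, dC' rt z = Phi C C' f φ φ' (rc + 1) rt ξ) →
        ∃ η, dualMap (dCone C C' dC dC' f rc) η = ξ) ∧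
    -- … and in cone degree 0 …
    (∀ ξ : Dual A (Cone C C' 0),
      dualMap (dCone C C' dC dC' f 0) ξ = 0 →
      (∃ z, dC' (n + 1) z = Phi C C' f φ φ' 0 (n + 1) ξ) → ξ = 0) ∧
    -- … surjectivity onto homology (target degrees rt ≥ 1) …
    (∀ rc rt : ℕ, rc + (rt + 1) = n + 1 →
      ∀ y : C' (rt + 1), dC' rt y = 0 →
        ∃ ξ : Dual A (Cone C C' rc),
          dualMap (dCone C C' dC dC' f rc) ξ = 0 ∧
          ∃ z, dC' (rt + 1) z = Phi C C' f φ φ' rc (rt + 1) ξ - y) ∧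
    -- … and in target degree 0
    (∀ y : C' 0,
      ∃ ξ : Dual A (Cone C C' (n + 1)),
        dualMap (dCone C C' dC dC' f (n + 1)) ξ = 0 ∧
        ∃ z, dC' 0 z = Phi C C' f φ φ' (n + 1) 0 ξ - y) := by
  
  obtain ⟨ψ, hh, kk, hψsupp, hψd, hψφ00, hψφ0S, hφψ00, hφψ0S⟩ := hP
  obtain ⟨g, hht, h', hgchain, hgf0, hgfS, hfg0, hfgS⟩ := hfe
  refine ⟨?_, ?_, ?_, ?_, ?_, ?_, ?_, ?_⟩
  · -- (1) the relative symmetric-pair equations hold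
    intro s r m hsum
    apply LinearMap.ext; intro ξ
    have h1 : dualMap (LinearMap.inl A (C m) (C' m))
        (dualMap (LinearMap.coprod (f m) LinearMap.id) ξ) = dualMap (f m) ξ :=
      dext fun x => by simp
    have h2 : dualMap (LinearMap.inr A (C m) (C' m))
        (dualMap (LinearMap.coprod (f m) LinearMap.id) ξ) = ξ :=
      dext fun y => by simp
    have h3 := LinearMap.ext_iff.mp (hcompat s r m hsum) ξ
    simp only [LinearMap.comp_apply] at h3 ⊢
    simp only [sumPhi, LinearMap.prod_apply, LinearMap.coprod_apply,
      LinearMap.neg_apply, Function.prod, LinearMap.id_apply, LinearMap.zero_apply,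
      LinearMap.comp_apply]
    rw [h1, h2, h3]
    abel
  · -- (2) structure equation, s = 0
    intro r m hsum
    apply LinearMap.ext; intro ξ
    have h1 : dualMap (LinearMap.inl A (C (m+1)) (C' (m+1)))
        (dualMap (LinearMap.prodMap (dC m) (dC' m)) ξ)
        = dualMap (dC m) (dualMap (LinearMap.inl A (C m) (C' m)) ξ) :=
      dext fun x => by simp
    have h2 : dualMap (LinearMap.inr A (C (m+1)) (C' (m+1)))
        (dualMap (LinearMap.prodMap (dC m) (dC' m)) ξ)
        = dualMap (dC' m) (dualMap (LinearMap.inr A (C m) (C' m)) ξ) :=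
      dext fun x => by simp
    have e0 := LinearMap.congr_fun (hφ0 r m hsum) (dualMap (LinearMap.inl A (C m) (C' m)) ξ)
    have e0' := LinearMap.congr_fun (hφ0' r m hsum) (dualMap (LinearMap.inr A (C m) (C' m)) ξ)
    simp only [LinearMap.add_apply, LinearMap.smul_apply, LinearMap.comp_apply,
      LinearMap.zero_apply] at e0 e0'
    simp only [LinearMap.add_apply, LinearMap.smul_apply, LinearMap.comp_apply,
      LinearMap.zero_apply, sumPhi, LinearMap.prod_apply, Function.prod,
      LinearMap.prodMap_apply, LinearMap.neg_apply, h1, h2, Prod.smul_mk,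
      Prod.mk_add_mk, Prod.mk_eq_zero, smul_neg, map_neg]
    exact ⟨e0, by rw [← neg_add, e0', neg_zero]⟩
  · -- (3) structure equations, s ≥ 1
    intro s r m hsum
    apply LinearMap.ext; intro ξ
    apply dext; intro ζ
    set ξl := dualMap (LinearMap.inl A (C m) (C' m)) ξ with hξl
    set ξr := dualMap (LinearMap.inr A (C m) (C' m)) ξ with hξr
    set ζl := dualMap (LinearMap.inl A (C r) (C' r)) ζ with hζl
    set ζr := dualMap (LinearMap.inr A (C r) (C' r)) ζ with hζr
    have h1 : dualMap (LinearMap.inl A (C (m+1)) (C' (m+1)))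
        (dualMap (LinearMap.prodMap (dC m) (dC' m)) ξ) = dualMap (dC m) ξl :=
      dext fun x => by simp [hξl]
    have h2 : dualMap (LinearMap.inr A (C (m+1)) (C' (m+1)))
        (dualMap (LinearMap.prodMap (dC m) (dC' m)) ξ) = dualMap (dC' m) ξr :=
      dext fun x => by simp [hξr]
    have e1 := congrArg (fun q => toL A q ζl) (LinearMap.congr_fun (hφS s r m hsum) ξl)
    have e1' := congrArg (fun q => toL A q ζr) (LinearMap.congr_fun (hφS' s r m hsum) ξr)
    simp only [LinearMap.add_apply, LinearMap.smul_apply, LinearMap.comp_apply,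
      LinearMap.zero_apply, toL_add, toL_zsmul, toL_evMap, toL_dualMap, toL_zero] at e1 e1'
    have hbig : LinearMap.prodMap (dC r) (dC' r) (sumPhi C C' φ φ' (s + 1) (r + 1) m ξ)
        + ((-1 : ℤ) ^ r) • (sumPhi C C' φ φ' (s + 1) r (m + 1)
            (dualMap (LinearMap.prodMap (dC m) (dC' m)) ξ))
        + ((-1 : ℤ) ^ (n + s)) • sumPhi C C' φ φ' s r m ξ
        = (dC r (φ (s + 1) (r + 1) m ξl)
              + ((-1 : ℤ) ^ r) • φ (s + 1) r (m + 1) (dualMap (dC m) ξl)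
              + ((-1 : ℤ) ^ (n + s)) • φ s r m ξl,
           -(dC' r (φ' (s + 1) (r + 1) m ξr)
              + ((-1 : ℤ) ^ r) • φ' (s + 1) r (m + 1) (dualMap (dC' m) ξr)
              + ((-1 : ℤ) ^ (n + s)) • φ' s r m ξr)) := by
      simp only [sumPhi, LinearMap.prod_apply, Function.prod, LinearMap.prodMap_apply,
        LinearMap.neg_apply, h1, h2, Prod.smul_mk, Prod.mk_add_mk, smul_neg, map_neg,
        neg_add, LinearMap.comp_apply, ← hξl, ← hξr]
    have hsp : toL A ξ (sumPhi C C' φ φ' s m r ζ)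
        = toL A ξl (φ s m r ζl) - toL A ξr (φ' s m r ζr) := by
      rw [show sumPhi C C' φ φ' s m r ζ = (φ s m r ζl, -(φ' s m r ζr)) from rfl]
      rw [toL_pair, ← hξl, ← hξr, toL_map_neg, sub_eq_add_neg]
    have hbig2 : (LinearMap.prodMap (dC r) (dC' r) ∘ₗ sumPhi C C' φ φ' (s + 1) (r + 1) m
              + ((-1 : ℤ) ^ r) • (sumPhi C C' φ φ' (s + 1) r (m + 1) ∘ₗ
                  dualMap (LinearMap.prodMap (dC m) (dC' m)))
              + ((-1 : ℤ) ^ (n + s)) • sumPhi C C' φ φ' s r m) ξ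
        = (dC r (φ (s + 1) (r + 1) m ξl)
              + ((-1 : ℤ) ^ r) • φ (s + 1) r (m + 1) (dualMap (dC m) ξl)
              + ((-1 : ℤ) ^ (n + s)) • φ s r m ξl,
           -(dC' r (φ' (s + 1) (r + 1) m ξr)
              + ((-1 : ℤ) ^ r) • φ' (s + 1) r (m + 1) (dualMap (dC' m) ξr)
              + ((-1 : ℤ) ^ (n + s)) • φ' s r m ξr)) := by
      simp only [LinearMap.add_apply, LinearMap.smul_apply, LinearMap.comp_apply]
      exact hbig
    show star (toL A ζ ((LinearMap.prodMap (dC r) (dC' r) ∘ₗ sumPhi C C' φ φ' (s + 1) (r + 1) m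
              + ((-1 : ℤ) ^ r) • (sumPhi C C' φ φ' (s + 1) r (m + 1) ∘ₗ
                  dualMap (LinearMap.prodMap (dC m) (dC' m)))
              + ((-1 : ℤ) ^ (n + s)) • sumPhi C C' φ φ' s r m) ξ))
        + ((-1 : ℤ) ^ (n + s) * (-1 : ℤ) ^ (s + 1) * (-1 : ℤ) ^ (r * m)) •
            toL A ξ (sumPhi C C' φ φ' s m r ζ) = 0
    rw [hbig2, toL_pair, ← hζl, ← hζr, hsp]
    simp only [toL_map_neg, star_add, star_neg]
    rw [eq_neg_of_add_eq_zero_left e1, eq_neg_of_add_eq_zero_left e1']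
    simp only [toL_map_neg, star_neg, smul_sub]
    abel
  · -- (4) Phi is a chain map
    intro rc rt hsum
    apply LinearMap.ext; intro ξ
    match rc, hsum with
    | 0, hsum =>
      have k1 : dualMap (inC C C' 0) (dualMap (dCone C C' dC dC' f 0) ξ)
          = dualMap (f 0) ξ := dext fun x => by
        rw [toL_dualMap, toL_dualMap,
          (show dC' 0 0 + (f 0 x + 0) = dCone C C' dC dC' f 0 (inC C C' 0 x) from rfl).symm]
        simp only [map_zero, zero_add, add_zero]
        rfl
      have k2 : dualMap (inC' C C' 0) (dualMap (dCone C C' dC dC' f 0) ξ) = ξ :=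
        dext fun x => by
          rw [toL_dualMap, toL_dualMap,
            (show dC' 0 0 + (f 0 0 + x) = dCone C C' dC dC' f 0 (inC' C C' 0 x) from rfl).symm]
          simp only [map_zero, zero_add, add_zero]
          rfl
      have ec := LinearMap.congr_fun (hcompat 0 rt 0 (by omega)) ξ
      simp only [LinearMap.comp_apply, LinearMap.add_apply, LinearMap.smul_apply,
        LinearMap.zero_apply] at ec ⊢
      show dC' rt ((0 : Dual A (Cone C C' 0) →ₗ[A] C' (rt + 1)) ξ)
        + ((-1 : ℤ) ^ rt) • ((f rt ∘ₗ φ 0 rt 0 ∘ₗ dualMap (inC C C' 0)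
            - φ' 0 rt 0 ∘ₗ dualMap (inC' C C' 0))
              (dualMap (dCone C C' dC dC' f 0) ξ)) = 0
      simp only [LinearMap.zero_apply, map_zero, LinearMap.sub_apply,
        LinearMap.comp_apply, k1, k2, ec, sub_self, smul_zero, add_zero]
      exact (zero_add _).trans ((congrArg (fun t : C' rt => ((-1 : ℤ) ^ rt) • t)
        (sub_eq_zero.mpr ec)).trans (smul_zero _))
    | (r + 1), hsum =>
      set ξj := dualMap (inD (A := A) (C := C) (C' := C') r) ξ with hξj
      set ξC := dualMap (inC C C' r) ξ with hξC
      set ξC' := dualMap (inC' C C' r) ξ with hξC'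
      have k1 := cone_k1 (A := A) dC dC' f r ξ
      have k2 := cone_k2 (A := A) dC dC' f r ξ
      rw [← hξj, ← hξC] at k1
      rw [← hξj, ← hξC'] at k2
      have e0 := LinearMap.congr_fun (hφ0 rt r (by omega)) ξC
      have e0' := LinearMap.congr_fun (hφ0' rt r (by omega)) ξC'
      have ec := LinearMap.congr_fun (hcompat 0 rt (r + 1) (by omega)) ξj
      have hfp := LinearMap.congr_fun (hf rt) (φ 0 (rt + 1) r ξC)
      simp only [LinearMap.comp_apply, LinearMap.add_apply, LinearMap.smul_apply,
        LinearMap.zero_apply] at e0 e0' ec hfp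
      show dC' rt ((f (rt + 1) ∘ₗ φ 0 (rt + 1) r ∘ₗ dualMap (inC C C' r)
            - φ' 0 (rt + 1) r ∘ₗ dualMap (inC' C C' r)) ξ)
        + ((-1 : ℤ) ^ rt) • ((f rt ∘ₗ φ 0 rt (r + 1) ∘ₗ dualMap (inC C C' (r + 1))
            - φ' 0 rt (r + 1) ∘ₗ dualMap (inC' C C' (r + 1)))
              (dualMap (dCone C C' dC dC' f (r + 1)) ξ)) = 0
      simp only [LinearMap.sub_apply, LinearMap.comp_apply, k1, k2, map_add,
        map_zsmul, ← hξC, ← hξC', map_sub]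
      rw [hfp, ec, eq_neg_of_add_eq_zero_left e0, eq_neg_of_add_eq_zero_left e0']
      simp only [map_neg, map_zsmul, smul_neg, smul_sub, smul_add, smul_smul]
      abel
  · -- (5) injectivity on cohomology, cone degrees ≥ 1
    intro rc rt hdeg ξ hξ hz
    match rc, hdeg, ξ, hξ, hz with
    | 0, hdeg, ξ, hξ, hz =>
      obtain rfl : rt = n := by omega
      set ξj := dualMap (inD (A := A) (C := C) (C' := C') 0) ξ with hξj
      set ξC := dualMap (inC C C' 0) ξ with hξC
      set ξC' := dualMap (inC' C C' 0) ξ with hξC'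
      have kb := cone_k1 (A := A) dC dC' f 0 ξ
      have kc := cone_k2 (A := A) dC dC' f 0 ξ
      rw [hξ, map_zero, ← hξj, ← hξC] at kb
      rw [hξ, map_zero, ← hξj, ← hξC'] at kc
      have kb' : dualMap (dC 0) ξC = -(((-1 : ℤ) ^ (0+1)) • dualMap (f (0+1)) ξj) :=
        eq_neg_of_add_eq_zero_right kb.symm
      have kc' : dualMap (dC' 0) ξC' = -(((-1 : ℤ) ^ (0+1)) • ξj) :=
        eq_neg_of_add_eq_zero_right kc.symm
      have kcj : dualMap (dC' 0) ξC' = ξj := by rw [kc']; simp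
      set ζ := ξC - dualMap (f 0) ξC' with hζdef
      have hcomm : dualMap (dC 0) (dualMap (f 0) ξC')
          = dualMap (f (0+1)) (dualMap (dC' 0) ξC') := dext fun x => by
        have hcf := LinearMap.congr_fun (hf 0) x
        simp only [LinearMap.comp_apply] at hcf
        simp only [toL_dualMap]
        rw [hcf]
      have hζ : dualMap (dC 0) ζ = 0 := by
        rw [hζdef, map_sub, kb', hcomm, kc', map_neg, map_zsmul, sub_self]
      clear_value ζ
      obtain ⟨z, hzz⟩ := hz
      have hPhi : Phi C C' f φ φ' (0+1) rt ξ = f rt (φ 0 rt 0 ζ) := by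
        show (f rt ∘ₗ φ 0 rt 0 ∘ₗ dualMap (inC C C' 0)
            - φ' 0 rt 0 ∘ₗ dualMap (inC' C C' 0)) ξ = f rt (φ 0 rt 0 ζ)
        have hcp := LinearMap.congr_fun (hcompat 0 rt 0 (by omega)) ξC'
        simp only [LinearMap.comp_apply, LinearMap.sub_apply] at hcp ⊢
        rw [← hξC, ← hξC', show ξC = dualMap (f 0) ξC' + ζ from by rw [hζdef]; abel,
          map_add, map_add, hcp]
        abel
      have hX0 : f rt (φ 0 rt 0 ζ) = 0 := by
        haveI := hbd' (rt+1) (by omega)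
        rw [← hPhi, ← hzz, Subsingleton.elim z 0, map_zero]
      haveI hsC := hbd (rt+1) (by omega)
      have hXzero : φ 0 rt 0 ζ = 0 := by
        cases rt with
        | zero =>
          have h1 := LinearMap.congr_fun hgf0 (φ 0 0 0 ζ)
          simp only [LinearMap.sub_apply, LinearMap.comp_apply, LinearMap.id_apply] at h1
          rw [hX0, map_zero, Subsingleton.elim (hht 0 (φ 0 0 0 ζ)) 0, map_zero] at h1
          simpa using h1
        | succ t =>
          have hd : dC t (φ 0 (t+1) 0 ζ) = 0 := by
            have h2 := LinearMap.congr_fun (hφ0 t 0 (by omega)) ζ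
            simp only [LinearMap.add_apply, LinearMap.comp_apply, LinearMap.smul_apply,
              LinearMap.zero_apply] at h2
            rw [hζ, map_zero, smul_zero, add_zero] at h2
            exact h2
          have h1 := LinearMap.congr_fun (hgfS t) (φ 0 (t+1) 0 ζ)
          simp only [LinearMap.sub_apply, LinearMap.comp_apply, LinearMap.add_apply,
            LinearMap.id_apply] at h1
          rw [hX0, map_zero, hd, map_zero,
            Subsingleton.elim (hht (t+1) (φ 0 (t+1) 0 ζ)) 0, map_zero, add_zero] at h1
          simpa using h1
      have hζ0 : ζ = 0 := by
        have h5 := LinearMap.congr_fun hφψ00 ζ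
        simp only [LinearMap.sub_apply, LinearMap.comp_apply, LinearMap.id_apply,
          LinearMap.smul_apply] at h5
        simp only [hXzero, hζ, map_zero, smul_zero, zero_sub, neg_eq_zero] at h5
        exact h5
      have hXC : ξC = dualMap (f 0) ξC' := by
        have h6 := hζ0
        rw [hζdef] at h6
        exact sub_eq_zero.mp h6
      refine ⟨ξC', ?_⟩
      apply dext; intro v
      show toL A ξC' (dC' 0 v.1 + (f 0 v.2.1 + v.2.2)) = toL A ξ v
      rw [toL_map_add, toL_map_add,
        show toL A ξC' (dC' 0 v.1) = toL A (dualMap (dC' 0) ξC') v.1 from rfl, kcj,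
        show toL A ξC' (f 0 v.2.1) = toL A (dualMap (f 0) ξC') v.2.1 from rfl, ← hXC,
        toL_cone, ← hξj, ← hξC, ← hξC']
      abel
    | (p + 1), hdeg, ξ, hξ, hz =>
      set ξj := dualMap (inD (A := A) (C := C) (C' := C') (p+1)) ξ with hξj
      set ξC := dualMap (inC C C' (p+1)) ξ with hξC
      set ξC' := dualMap (inC' C C' (p+1)) ξ with hξC'
      have kb := cone_k1 (A := A) dC dC' f (p+1) ξ
      have kc := cone_k2 (A := A) dC dC' f (p+1) ξ
      rw [hξ, map_zero, ← hξj, ← hξC] at kb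
      rw [hξ, map_zero, ← hξj, ← hξC'] at kc
      have kb' : dualMap (dC (p+1)) ξC = -(((-1 : ℤ) ^ (p+1+1)) • dualMap (f (p+1+1)) ξj) :=
        eq_neg_of_add_eq_zero_right kb.symm
      have kc' : dualMap (dC' (p+1)) ξC' = -(((-1 : ℤ) ^ (p+1+1)) • ξj) :=
        eq_neg_of_add_eq_zero_right kc.symm
      have kc'' : dualMap (dC' (p+1)) ξC' = ((-1 : ℤ) ^ (p+1)) • ξj := by
        rw [kc', pow_succ, mul_neg_one, neg_smul, neg_neg]
      set ζ := ξC - dualMap (f (p+1)) ξC' with hζdef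
      have hcomm : dualMap (dC (p+1)) (dualMap (f (p+1)) ξC')
          = dualMap (f (p+1+1)) (dualMap (dC' (p+1)) ξC') := dext fun x => by
        have hcf := LinearMap.congr_fun (hf (p+1)) x
        simp only [LinearMap.comp_apply] at hcf
        simp only [toL_dualMap]
        rw [hcf]
      have hζ : dualMap (dC (p+1)) ζ = 0 := by
        rw [hζdef, map_sub, kb', hcomm, kc', map_neg, map_zsmul, sub_self]
      clear_value ζ
      obtain ⟨z, hzz⟩ := hz
      have hPhi : Phi C C' f φ φ' (p+1+1) rt ξ = f rt (φ 0 rt (p+1) ζ) := by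
        show (f rt ∘ₗ φ 0 rt (p+1) ∘ₗ dualMap (inC C C' (p+1))
            - φ' 0 rt (p+1) ∘ₗ dualMap (inC' C C' (p+1))) ξ = f rt (φ 0 rt (p+1) ζ)
        have hcp := LinearMap.congr_fun (hcompat 0 rt (p+1) (by omega)) ξC'
        simp only [LinearMap.comp_apply, LinearMap.sub_apply] at hcp ⊢
        rw [← hξC, ← hξC', show ξC = dualMap (f (p+1)) ξC' + ζ from by rw [hζdef]; abel,
          map_add, map_add, hcp]
        abel
      have hXd : f rt (φ 0 rt (p+1) ζ) = dC' rt z := by rw [← hPhi, hzz]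
      have hu : φ 0 rt (p+1) ζ = dC rt (g (rt+1) z - hht rt (φ 0 rt (p+1) ζ)) := by
        have hgz := LinearMap.congr_fun (hgchain rt) z
        simp only [LinearMap.comp_apply] at hgz
        cases rt with
        | zero =>
          have h1 := LinearMap.congr_fun hgf0 (φ 0 0 (p+1) ζ)
          simp only [LinearMap.sub_apply, LinearMap.comp_apply, LinearMap.id_apply] at h1
          rw [hXd, ← hgz] at h1
          rw [map_sub, ← h1]
          abel
        | succ t =>
          have hdX : dC t (φ 0 (t+1) (p+1) ζ) = 0 := by
            have h2 := LinearMap.congr_fun (hφ0 t (p+1) (by omega)) ζ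
            simp only [LinearMap.add_apply, LinearMap.comp_apply, LinearMap.smul_apply,
              LinearMap.zero_apply] at h2
            rw [hζ, map_zero, smul_zero, add_zero] at h2
            exact h2
          have h1 := LinearMap.congr_fun (hgfS t) (φ 0 (t+1) (p+1) ζ)
          simp only [LinearMap.sub_apply, LinearMap.comp_apply, LinearMap.add_apply,
            LinearMap.id_apply] at h1
          rw [hXd, ← hgz, hdX, map_zero, add_zero] at h1
          rw [map_sub, ← h1]
          abel
      set ζ₀ := ((-1 : ℤ) ^ (rt+1)) •
        (ψ (rt+1) p (g (rt+1) z - hht rt (φ 0 rt (p+1) ζ)) - kk p ζ) with hζ₀def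
      have e6 := LinearMap.congr_fun (hφψ0S rt p (by omega)) ζ
      simp only [LinearMap.sub_apply, LinearMap.comp_apply, LinearMap.add_apply,
        LinearMap.id_apply, LinearMap.smul_apply] at e6
      rw [hζ, map_zero, smul_zero, add_zero] at e6
      have e2 := LinearMap.congr_fun (hψd rt p (by omega))
        (g (rt+1) z - hht rt (φ 0 rt (p+1) ζ))
      simp only [LinearMap.comp_apply, LinearMap.smul_apply] at e2
      have e7 : ψ rt (p+1) (φ 0 rt (p+1) ζ) = ((-1 : ℤ) ^ (rt+1)) •
          dualMap (dC p) (ψ (rt+1) p (g (rt+1) z - hht rt (φ 0 rt (p+1) ζ))) := by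
        conv_lhs => rw [hu]
        exact e2.symm
      have hζfac : ζ = dualMap (dC p) ζ₀ := by
        rw [hζ₀def, map_zsmul, map_sub, smul_sub, ← e7, ← e6]
        abel
      refine ⟨((-1 : ℤ) ^ (p+1)) • dualMap (prD (A := A) (C := C) (C' := C') p) ξC'
        + dualMap (prC (A := A) (C := C) (C' := C') p) ζ₀, ?_⟩
      apply dext; intro v
      rw [toL_dualMap,
        show dCone C C' dC dC' f (p+1) v
          = ((dC' (p+1) v.1 + ((-1 : ℤ) ^ (p+1)) • (f (p+1) v.2.1 + v.2.2),
              (dC p v.2.1, dC' p v.2.2)) : Cone C C' (p+1)) from rfl,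
        show toL A (((-1 : ℤ) ^ (p+1)) • dualMap (prD (A := A) (C := C) (C' := C') p) ξC'
            + dualMap (prC (A := A) (C := C) (C' := C') p) ζ₀)
            ((dC' (p+1) v.1 + ((-1 : ℤ) ^ (p+1)) • (f (p+1) v.2.1 + v.2.2),
              (dC p v.2.1, dC' p v.2.2)) : Cone C C' (p+1))
          = ((-1 : ℤ) ^ (p+1)) • toL A ξC'
              (dC' (p+1) v.1 + ((-1 : ℤ) ^ (p+1)) • (f (p+1) v.2.1 + v.2.2))
            + toL A ζ₀ (dC p v.2.1) from rfl,
        toL_map_add, toL_map_zsmul, toL_map_add,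
        show toL A ξC' (dC' (p+1) v.1) = toL A (dualMap (dC' (p+1)) ξC') v.1 from rfl, kc'',
        show toL A ζ₀ (dC p v.2.1) = toL A (dualMap (dC p) ζ₀) v.2.1 from rfl, ← hζfac,
        hζdef, toL_sub,
        show toL A (dualMap (f (p+1)) ξC') v.2.1 = toL A ξC' (f (p+1) v.2.1) from rfl,
        toL_cone, ← hξj, ← hξC, ← hξC']
      simp only [smul_add, neg_one_smul_smul, toL_zsmul]
      abel
  · -- (6) injectivity in cone degree 0
    intro ξ hξ _
    have h0 : ∀ x : C' 0, toL A ξ x = 0 := fun x => by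
      have h1 := congrArg (fun q => toL A q (inC' (A := A) C C' 0 x)) hξ
      simp only [toL_dualMap, toL_zero] at h1
      rw [(show dC' 0 0 + (f 0 0 + x)
          = dCone C C' dC dC' f 0 (inC' (A := A) C C' 0 x) from rfl).symm] at h1
      simp only [map_zero, zero_add, add_zero] at h1
      exact h1
    apply dext; intro v
    rw [toL_zero]
    exact h0 v
  · -- (7) surjectivity onto homology, target degrees ≥ 1
    intro rc rt hdeg y hy
    match rc, hdeg with
    | 0, hdeg =>
      haveI := hbd' (rt+1) (by omega)
      refine ⟨0, by rw [map_zero], 0, ?_⟩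
      rw [Subsingleton.elim y 0]
      simp
    | (p + 1), hdeg =>
      set w := g (rt+1) y with hwdef
      have hdw : dC rt w = 0 := by
        have h1 := LinearMap.congr_fun (hgchain rt) y
        simp only [LinearMap.comp_apply] at h1
        rw [hwdef, h1, hy, map_zero]
      set ζ := ψ (rt+1) p w with hζdef
      have hζco : dualMap (dC p) ζ = 0 := by
        have h2 := LinearMap.congr_fun (hψd rt p (by omega)) w
        simp only [LinearMap.comp_apply, LinearMap.smul_apply] at h2
        rw [hdw, map_zero, ← hζdef] at h2
        exact neg_one_smul_eq_zero (rt+1) h2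
      refine ⟨dualMap (prC (A := A) (C := C) (C' := C') p) ζ, ?_,
        ⟨f (rt+1+1) (hh (rt+1) w) + h' (rt+1) y, ?_⟩⟩
      · apply dext; intro v
        rw [toL_dualMap, toL_dualMap,
          show prC (A := A) (C := C) (C' := C') p (dCone C C' dC dC' f (p+1) v)
            = dC p v.2.1 from rfl,
          show toL A ζ (dC p v.2.1) = toL A (dualMap (dC p) ζ) v.2.1 from rfl,
          hζco, toL_zero, toL_zero]
      · have hPhi : Phi C C' f φ φ' (p+1) (rt+1)
            (dualMap (prC (A := A) (C := C) (C' := C') p) ζ)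
            = f (rt+1) (φ 0 (rt+1) p ζ) := by
          show (f (rt+1) ∘ₗ φ 0 (rt+1) p ∘ₗ dualMap (inC C C' p)
              - φ' 0 (rt+1) p ∘ₗ dualMap (inC' C C' p))
                (dualMap (prC (A := A) (C := C) (C' := C') p) ζ) = _
          simp only [LinearMap.sub_apply, LinearMap.comp_apply, prC_inC, prC_inC',
            map_zero, sub_zero]
        have e4 := LinearMap.congr_fun (hψφ0S rt p (by omega)) w
        simp only [LinearMap.sub_apply, LinearMap.comp_apply, LinearMap.add_apply,
          LinearMap.id_apply] at e4
        rw [hdw, map_zero, add_zero, ← hζdef] at e4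
        have e5 := LinearMap.congr_fun (hfgS rt) y
        simp only [LinearMap.sub_apply, LinearMap.comp_apply, LinearMap.add_apply,
          LinearMap.id_apply] at e5
        rw [hy, map_zero, add_zero, ← hwdef] at e5
        have e3 := LinearMap.congr_fun (hf (rt+1)) (hh (rt+1) w)
        simp only [LinearMap.comp_apply] at e3
        rw [hPhi, map_add, e3, ← e4, ← e5, map_sub]
        abel
  · -- (8) surjectivity in target degree 0
    intro y
    set w := g 0 y with hwdef
    set ζ := ψ 0 n w with hζdef
    haveI hsC := hbd (n+1) (by omega)
    refine ⟨dualMap (prC (A := A) (C := C) (C' := C') n) ζ, ?_,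
      ⟨f (0+1) (hh 0 w) + h' 0 y, ?_⟩⟩
    · apply dext; intro v
      rw [toL_dualMap, toL_dualMap,
        show prC (A := A) (C := C) (C' := C') n (dCone C C' dC dC' f (n+1) v)
          = dC n v.2.1 from rfl,
        Subsingleton.elim v.2.1 0, map_zero, toL_map_zero, toL_zero]
    · have hPhi : Phi C C' f φ φ' (n+1) 0
          (dualMap (prC (A := A) (C := C) (C' := C') n) ζ) = f 0 (φ 0 0 n ζ) := by
        show (f 0 ∘ₗ φ 0 0 n ∘ₗ dualMap (inC C C' n)
            - φ' 0 0 n ∘ₗ dualMap (inC' C C' n))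
              (dualMap (prC (A := A) (C := C) (C' := C') n) ζ) = _
        simp only [LinearMap.sub_apply, LinearMap.comp_apply, prC_inC, prC_inC',
          map_zero, sub_zero]
      have e4 := LinearMap.congr_fun hψφ00 w
      simp only [LinearMap.sub_apply, LinearMap.comp_apply, LinearMap.id_apply] at e4
      rw [← hζdef] at e4
      have e5 := LinearMap.congr_fun hfg0 y
      simp only [LinearMap.sub_apply, LinearMap.comp_apply, LinearMap.id_apply] at e5
      rw [← hwdef] at e5
      have e3 := LinearMap.congr_fun (hf 0) (hh 0 w)
      simp only [LinearMap.comp_apply] at e3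
      rw [hPhi, map_add, e3, ← e4, ← e5, map_sub]
      abel
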